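/- (Theorem 2.1, periodicity) Let z ≥ 1 and L ≥ 1 be natural numbers and set M = 2^z + L. Then: (a) for every i < z, T^i(M) ≡ T^i(L) (mod 2); (b) T^z(M) = T^z(L) + 3^{α_z(L)}; and (c) T^z(M) and T^z(L) have opposite parities. -/
import Mathlib


/-- The shortcut Collatz map: `T x = (3x+1)/2` if `x` is odd, `x/2` if `x` is even. -/
def T (x : ℕ) : ℕ := if Odd x then (3 * x + 1) / 2 else x / 2

/-- `alpha i L` is the number of indices `j < i` such that `T^[j] L` is odd. -/
def alpha (i L : ℕ) : ℕ := ((Finset.range i).filter (fun j => Odd (T^[j] L))).card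

lemma alpha_succ (i L : ℕ) :
    alpha (i+1) L = alpha i L + if Odd (T^[i] L) then 1 else 0 := by
  unfold alpha
  rw [Finset.range_add_one, Finset.filter_insert]
  split
  · rw [Finset.card_insert_of_notMem (by simp)]
  · simp

lemma key (z L : ℕ) : ∀ i ≤ z, T^[i] (2^z + L) = 3^(alpha i L) * 2^(z-i) + T^[i] L := by
  intro i hi
  induction i with
  | zero => simp [alpha]
  | succ n ih =>
    have hn : n ≤ z := Nat.le_of_succ_le hi
    have ih := ih hn
    have hpow : 2^(z-n) = 2 * 2^(z-(n+1)) := by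
      rw [← pow_succ']
      congr 1
      omega
    rw [Function.iterate_succ_apply', Function.iterate_succ_apply', ih, alpha_succ]
    set A := 3^(alpha n L) with hA
    set B := 2^(z-(n+1)) with hB
    by_cases h : Odd (T^[n] L)
    · obtain ⟨m, hm⟩ := h
      have hodd : Odd (A * 2^(z-n) + T^[n] L) := ⟨A * B + m, by
        rw [hpow, hm]; ring⟩
      rw [T, if_pos hodd, T, if_pos ⟨m, hm⟩, if_pos ⟨m, hm⟩, hpow, hm,
        show 3 * (A * (2 * B) + (2 * m + 1)) + 1 = (3 * A * B + (3 * m + 2)) * 2 from by ring,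
        show 3 * (2 * m + 1) + 1 = (3 * m + 2) * 2 from by ring,
        Nat.mul_div_cancel _ two_pos, Nat.mul_div_cancel _ two_pos, pow_succ]
      ring
    · have hx : Even (T^[n] L) := Nat.not_odd_iff_even.mp h
      obtain ⟨m, hm⟩ := hx
      have heven : ¬ Odd (A * 2^(z-n) + T^[n] L) := by
        rw [Nat.not_odd_iff_even]
        exact ⟨A * B + m, by rw [hpow, hm]; ring⟩
      rw [T, if_neg heven, T, if_neg h, if_neg h, hpow, hm,
        show A * (2 * B) + (m + m) = (A * B + m) * 2 from by ring,
        show m + m = m * 2 from by ring,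
        Nat.mul_div_cancel _ two_pos, Nat.mul_div_cancel _ two_pos, add_zero]

theorem stmt1 (z L M : ℕ) (hz : 1 ≤ z) (hL : 1 ≤ L) (hM : M = 2 ^ z + L) :
    (∀ i < z, T^[i] M % 2 = T^[i] L % 2) ∧
    T^[z] M = T^[z] L + 3 ^ (alpha z L) ∧
    (Odd (T^[z] M) ↔ ¬ Odd (T^[z] L)) := by
  subst hM
  have hz' := key z L z le_rfl
  simp only [Nat.sub_self, pow_zero, mul_one] at hz'
  refine ⟨?_, by omega, ?_⟩
  · intro i hi
    have h := key z L i (le_of_lt hi)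
    have hpow : 2^(z-i) = 2 * 2^(z-i-1) := by
      rw [← pow_succ']; congr 1; omega
    rw [h, hpow,
      show 3^(alpha i L) * (2 * 2^(z-i-1)) + T^[i] L
        = T^[i] L + (3^(alpha i L) * 2^(z-i-1)) * 2 from by ring,
      Nat.add_mul_mod_self_right]
  · have hodd : Odd (3^(alpha z L)) := Odd.pow (by decide)
    rw [hz']
    obtain ⟨k, hk⟩ := hodd
    constructor
    · intro h hL'
      obtain ⟨a, ha⟩ := h
      obtain ⟨b, hb⟩ := hL'
      omega
    · intro h
      rw [Nat.not_odd_iff_even] at h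
      obtain ⟨b, hb⟩ := h
      exact ⟨b + k, by omega⟩
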